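/- Under the Dubrovin-equations setup, assume in addition that λ_k(t) ∈ (b_{2k−1}, b_{2k}) for every k = 1, …, n and every t ∈ I, and that each w_k : I → ℝ is continuous. Then for every k and every t ∈ I the sign of λ̇_k(t) equals (−1)^{n−k+1} times the sign of w_k(t); consequently each w_k has constant sign on I and each λ̇_k has constant sign on I, i.e. the direction of motion of each divisor point λ_k in its gap is constant. -/

import Mathlib

open Finset

private lemma sign_mul_of_neg' {c x : ℝ} (hc : c < 0) : Real.sign (c * x) = - Real.sign x := by
  rcases lt_trichotomy x 0 with h | h | h
  · rw [Real.sign_of_neg h, Real.sign_of_pos (mul_pos_of_neg_of_neg hc h)]; ring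
  · simp [h]
  · rw [Real.sign_of_pos h, Real.sign_of_neg (mul_neg_of_neg_of_pos hc h)]

private lemma sign_mul_of_pos' {c x : ℝ} (hc : 0 < c) : Real.sign (c * x) = Real.sign x := by
  rcases lt_trichotomy x 0 with h | h | h
  · rw [Real.sign_of_neg h, Real.sign_of_neg (mul_neg_of_pos_of_neg hc h)]
  · simp [h]
  · rw [Real.sign_of_pos h, Real.sign_of_pos (mul_pos hc h)]

private lemma sign_const_of_cont' {p q : ℝ} {f : ℝ → ℝ} (hc : ContinuousOn f (Set.Ioo p q))
    (hne : ∀ t ∈ Set.Ioo p q, f t ≠ 0) :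
    ∀ t ∈ Set.Ioo p q, ∀ s ∈ Set.Ioo p q, Real.sign (f t) = Real.sign (f s) := by
  have main : ∀ t ∈ Set.Ioo p q, ∀ s ∈ Set.Ioo p q, t ≤ s →
      Real.sign (f t) = Real.sign (f s) := by
    intro t ht s hs hts
    have hsub : Set.Icc t s ⊆ Set.Ioo p q := fun x hx =>
      ⟨lt_of_lt_of_le ht.1 hx.1, lt_of_le_of_lt hx.2 hs.2⟩
    have hcc : ContinuousOn f (Set.Icc t s) := hc.mono hsub
    rcases hne t ht |>.lt_or_gt with h1 | h1 <;> rcases hne s hs |>.lt_or_gt with h2 | h2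
    · rw [Real.sign_of_neg h1, Real.sign_of_neg h2]
    · obtain ⟨x, hx, hfx⟩ := intermediate_value_Icc hts hcc ⟨h1.le, h2.le⟩
      exact absurd hfx (hne x (hsub hx))
    · obtain ⟨x, hx, hfx⟩ := intermediate_value_Icc' hts hcc ⟨h2.le, h1.le⟩
      exact absurd hfx (hne x (hsub hx))
    · rw [Real.sign_of_pos h1, Real.sign_of_pos h2]
  intro t ht s hs
  rcases le_total t s with h | h
  · exact main t ht s hs h
  · exact (main s hs t ht h).symm

/-- Constant direction of motion of the divisor points in the gaps: if moreover each
`λₖ(t)` stays in the gap `(b_{2k−1}, b_{2k})` and each `wₖ` is continuous, then for every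
`k` and `t` the sign of `λ̇ₖ(t)` equals `(−1)^{n−k+1}` times the sign of `wₖ(t)`
(here `k = 1, …, n`); consequently each `wₖ` and each `λ̇ₖ` has constant sign on `I`. -/
theorem dubrovin_constant_direction (n : ℕ) (hn : 1 ≤ n)
    (b : Fin (2 * n + 1) → ℝ) (hb0 : b 0 = 0) (hb : StrictMono b)
    (p q : ℝ) (lam lamdot : Fin n → ℝ → ℝ) (w : Fin n → ℝ → ℝ)
    (hlam_deriv : ∀ t ∈ Set.Ioo p q, ∀ k : Fin n, HasDerivAt (lam k) (lamdot k t) t)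
    (hlam_ne_zero : ∀ t ∈ Set.Ioo p q, ∀ k : Fin n, lam k t ≠ 0)
    (hlam_distinct : ∀ t ∈ Set.Ioo p q, ∀ k l : Fin n, k ≠ l → lam k t ≠ lam l t)
    (hw_ne : ∀ t ∈ Set.Ioo p q, ∀ k : Fin n, w k t ≠ 0)
    (hw : ∀ t ∈ Set.Ioo p q, ∀ k : Fin n, (w k t) ^ 2 = -∏ i, (lam k t - b i))
    (hdubrovin : ∀ t ∈ Set.Ioo p q, ∀ k : Fin n,
      lamdot k t = -2 * w k t / (lam k t * ∏ j ∈ univ.erase k, (lam k t - lam j t)))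
    (hgap : ∀ t ∈ Set.Ioo p q, ∀ k : Fin n,
      lam k t ∈ Set.Ioo (b ⟨2 * (k : ℕ) + 1, by omega⟩) (b ⟨2 * (k : ℕ) + 2, by omega⟩))
    (hw_cont : ∀ k : Fin n, ContinuousOn (w k) (Set.Ioo p q)) :
    (∀ k : Fin n, ∀ t ∈ Set.Ioo p q,
      Real.sign (lamdot k t) =
        (-1 : ℝ) ^ (n - ((k : ℕ) + 1) + 1) * Real.sign (w k t)) ∧
    (∀ k : Fin n, ∀ t ∈ Set.Ioo p q, ∀ s ∈ Set.Ioo p q,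
      Real.sign (w k t) = Real.sign (w k s)) ∧
    (∀ k : Fin n, ∀ t ∈ Set.Ioo p q, ∀ s ∈ Set.Ioo p q,
      Real.sign (lamdot k t) = Real.sign (lamdot k s)) := by
  have key : ∀ k : Fin n, ∀ t ∈ Set.Ioo p q,
      Real.sign (lamdot k t) =
        (-1 : ℝ) ^ (n - ((k : ℕ) + 1) + 1) * Real.sign (w k t) := by
    intro k t ht
    set L := lam k t with hL
    -- ordering of divisor points
    have horder : ∀ i j : Fin n, i < j → lam i t < lam j t := by
      intro i j hij
      have h1 := (hgap t ht i).2
      have h2 := (hgap t ht j).1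
      have h3 : b ⟨2 * (i : ℕ) + 2, by omega⟩ ≤ b ⟨2 * (j : ℕ) + 1, by omega⟩ :=
        hb.monotone (by rw [Fin.mk_le_mk]; have : (i : ℕ) < j := hij; omega)
      linarith
    have hpos : 0 < L := by
      have h1 := (hgap t ht k).1
      have h2 : b 0 < b ⟨2 * (k : ℕ) + 1, by omega⟩ := hb (by rw [Fin.lt_def]; simp)
      rw [hb0] at h2; linarith
    -- decompose the product
    have hsplit : (univ.erase k) = Finset.Iio k ∪ Finset.Ioi k := by
      ext j
      simp only [Finset.mem_erase, Finset.mem_union, Finset.mem_Iio, Finset.mem_Ioi,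
        Finset.mem_univ, and_true]
      exact ne_iff_lt_or_gt
    have hdisj : Disjoint (Finset.Iio k) (Finset.Ioi k) := by
      rw [Finset.disjoint_left]
      intro j hj hj'
      exact absurd (Finset.mem_Ioi.mp hj') (not_lt.mpr (Finset.mem_Iio.mp hj).le)
    set m := n - 1 - (k : ℕ) with hm
    have hcard : (Finset.Ioi k).card = m := by rw [Fin.card_Ioi]
    have hP1 : 0 < ∏ j ∈ Finset.Iio k, (L - lam j t) := by
      apply Finset.prod_pos
      intro j hj
      exact sub_pos.mpr (horder j k (Finset.mem_Iio.mp hj))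
    have hQ : 0 < ∏ j ∈ Finset.Ioi k, (lam j t - L) := by
      apply Finset.prod_pos
      intro j hj
      exact sub_pos.mpr (horder k j (Finset.mem_Ioi.mp hj))
    have hP2 : ∏ j ∈ Finset.Ioi k, (L - lam j t)
        = (-1 : ℝ) ^ m * ∏ j ∈ Finset.Ioi k, (lam j t - L) := by
      rw [← hcard, ← Finset.prod_const, ← Finset.prod_mul_distrib]
      exact Finset.prod_congr rfl (fun j _ => by ring)
    have hPsplit : ∏ j ∈ univ.erase k, (L - lam j t)
        = (∏ j ∈ Finset.Iio k, (L - lam j t)) *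
          ((-1 : ℝ) ^ m * ∏ j ∈ Finset.Ioi k, (lam j t - L)) := by
      rw [hsplit, Finset.prod_union hdisj, hP2]
    have hld : lamdot k t
        = (-2 / (L * ∏ j ∈ univ.erase k, (L - lam j t))) * w k t := by
      rw [hdubrovin t ht k]; ring
    have hexp : n - ((k : ℕ) + 1) + 1 = m + 1 := by
      have : (k : ℕ) < n := k.isLt
      omega
    rw [hexp, hld]
    rcases Nat.even_or_odd m with hme | hmo
    · have hm1 : (-1 : ℝ) ^ m = 1 := hme.neg_one_pow
      have hD : 0 < L * ∏ j ∈ univ.erase k, (L - lam j t) := by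
        rw [hPsplit, hm1]
        positivity
      have hc : -2 / (L * ∏ j ∈ univ.erase k, (L - lam j t)) < 0 :=
        div_neg_of_neg_of_pos (by norm_num) hD
      rw [sign_mul_of_neg' hc, pow_succ, hm1]
      ring
    · have hm1 : (-1 : ℝ) ^ m = -1 := hmo.neg_one_pow
      have hD : L * ∏ j ∈ univ.erase k, (L - lam j t) < 0 := by
        rw [hPsplit, hm1]
        apply mul_neg_of_pos_of_neg hpos
        apply mul_neg_of_pos_of_neg hP1
        linarith
      have hc : 0 < -2 / (L * ∏ j ∈ univ.erase k, (L - lam j t)) :=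
        div_pos_of_neg_of_neg (by norm_num) hD
      rw [sign_mul_of_pos' hc, pow_succ, hm1]
      ring
  have wconst : ∀ k : Fin n, ∀ t ∈ Set.Ioo p q, ∀ s ∈ Set.Ioo p q,
      Real.sign (w k t) = Real.sign (w k s) := fun k =>
    sign_const_of_cont' (hw_cont k) (fun t ht => hw_ne t ht k)
  refine ⟨fun k t ht => key k t ht, wconst, fun k t ht s hs => ?_⟩
  rw [key k t ht, key k s hs, wconst k t ht s hs]
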